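/- Let G be a topological group and A an open precompact non-empty subset such that the function f(x) = μ(A ∩ x·A)/μ(A) (where μ is a bi-invariant Haar measure) satisfies f(x) ≥ ε for all x in its support A·A⁻¹. Then A·A⁻¹ is both open and closed, and hence compact. -/

import Mathlib

open scoped Pointwise

open MeasureTheory Filter

theorem support_clopen {G : Type*} [Group G] [TopologicalSpace G]
    [IsTopologicalGroup G] [LocallyCompactSpace G] [T2Space G]
    [MeasurableSpace G] [BorelSpace G]
    (μ : MeasureTheory.Measure G) [μ.IsHaarMeasure] [μ.IsMulRightInvariant]
    (A : Set G) (hopen : IsOpen A) (hpre : IsCompact (closure A)) (hne : A.Nonempty)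
    (ε : ℝ) (hε : 0 < ε)
    (hgap : ∀ x ∈ A * A⁻¹, ENNReal.ofReal ε * μ A ≤ μ (A ∩ x • A)) :
    IsOpen (A * A⁻¹) ∧ IsClosed (A * A⁻¹) ∧ IsCompact (A * A⁻¹) := by
  classical
  -- openness
  have hOpen : IsOpen (A * A⁻¹) := hopen.mul_right
  -- canonical regular Haar measure
  set ν : Measure G := MeasureTheory.Measure.haar with hν
  set c : NNReal := Measure.haarScalarFactor μ ν with hc
  have hc0 : (c : ENNReal) ≠ 0 := by
    exact_mod_cast (Measure.haarScalarFactor_pos_of_isHaarMeasure μ ν).ne'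
  have hctop : (c : ENNReal) ≠ ⊤ := ENNReal.coe_ne_top
  -- transfer μ to ν on subsets of closure A
  have htrans : ∀ s : Set G, s ⊆ A → μ s = (c : ENNReal) * ν s := by
    intro s hs
    have hcc : IsCompact (closure s) := by
      refine hpre.of_isClosed_subset isClosed_closure ?_
      exact closure_mono hs
    simpa [smul_eq_mul] using
      Measure.measure_isMulInvariant_eq_smul_of_isCompact_closure μ ν hcc
  -- gap for ν
  have hgapν : ∀ x ∈ A * A⁻¹, ENNReal.ofReal ε * ν A ≤ ν (A ∩ x • A) := by
    intro x hx
    have h := hgap x hx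
    rw [htrans A Set.Subset.rfl, htrans (A ∩ x • A) Set.inter_subset_left] at h
    rw [show ENNReal.ofReal ε * ((c : ENNReal) * ν A)
        = (c : ENNReal) * (ENNReal.ofReal ε * ν A) by ring] at h
    exact (ENNReal.mul_le_mul_iff_right hc0 hctop).mp h
  have hνA_pos : 0 < ν A := hopen.measure_pos ν hne
  have hνA_fin : ν A < ⊤ :=
    lt_of_le_of_lt (measure_mono subset_closure) hpre.measure_lt_top
  set δ : ENNReal := ENNReal.ofReal ε * ν A with hδ
  have hδ0 : δ ≠ 0 := by
    simp only [hδ, ne_eq, mul_eq_zero, not_or]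
    exact ⟨by simpa using hε, hνA_pos.ne'⟩
  -- compact inner approximation of A
  obtain ⟨k, hkA, hk_comp, hk_closed, hk_small⟩ :
      ∃ k ⊆ A, IsCompact k ∧ IsClosed k ∧ ν (A \ k) < δ / 2 :=
    hopen.measurableSet.exists_isCompact_isClosed_diff_lt
      (lt_of_le_of_lt (measure_mono subset_closure) hpre.measure_lt_top).ne
      (by simpa using (ENNReal.half_pos hδ0).ne')
  -- eventually the translated difference is small
  have hev : ∀ᶠ g in nhds (1 : G), ν (A \ g • A) < δ := by
    have h1 : ∀ᶠ g in nhds (1 : G), ν (g • k \ k) < δ / 2 :=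
      MeasureTheory.eventually_nhds_one_measure_smul_diff_lt hk_comp hk_closed
        (by simpa using (ENNReal.half_pos hδ0).ne')
    have h2 : ∀ᶠ g in nhds (1 : G), ν (g⁻¹ • k \ k) < δ / 2 :=
      (continuous_inv.tendsto' (1 : G) 1 inv_one).eventually h1
    filter_upwards [h2] with g hg
    have hsub : A \ g • A ⊆ (A \ k) ∪ (k \ g • k) := by
      intro a ha
      by_cases hak : a ∈ k
      · exact Or.inr ⟨hak, fun h => ha.2 (Set.smul_set_mono hkA h)⟩
      · exact Or.inl ⟨ha.1, hak⟩
    have hkgk : ν (k \ g • k) = ν (g⁻¹ • k \ k) := by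
      rw [← measure_smul g⁻¹ (k \ g • k) (μ := ν)]
      congr 1
      rw [Set.smul_set_sdiff, smul_smul, inv_mul_cancel, one_smul]
    calc ν (A \ g • A) ≤ ν ((A \ k) ∪ (k \ g • k)) := measure_mono hsub
      _ ≤ ν (A \ k) + ν (k \ g • k) := measure_union_le _ _
      _ < δ / 2 + δ / 2 := by rw [hkgk]; exact ENNReal.add_lt_add hk_small hg
      _ = δ := ENNReal.add_halves δ
  -- closedness
  have hClosed : IsClosed (A * A⁻¹) := by
    refine isClosed_of_closure_subset ?_
    intro x hx
    by_contra hxmem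
    -- A and x • A are disjoint
    have hdisj : A ∩ x • A = ∅ := by
      rw [Set.eq_empty_iff_forall_notMem]
      rintro a ⟨haA, b, hbA, rfl⟩
      exact hxmem (by simpa using Set.mul_mem_mul haA (Set.inv_mem_inv.mpr hbA))
    -- find y ∈ A * A⁻¹ close to x
    have hev' : ∀ᶠ y in nhds x, ν (A \ (y⁻¹ * x) • A) < δ := by
      have hcont : Continuous fun y : G => y⁻¹ * x := by continuity
      exact (hcont.tendsto' x 1 (by simp)).eventually hev
    obtain ⟨y, hyν, hy⟩ :=
      ((mem_closure_iff_frequently.mp hx).and_eventually hev').exists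
    -- derive the contradiction
    have key : ν (A ∩ y • A) ≤ ν (A \ (y⁻¹ * x) • A) := by
      have h1 : A ∩ y • A ⊆ y • A \ x • A := by
        intro a ⟨h1, h2⟩
        refine ⟨h2, fun h => ?_⟩
        rw [Set.eq_empty_iff_forall_notMem] at hdisj
        exact hdisj a ⟨h1, h⟩
      have h2 : y • A \ x • A = y • (A \ (y⁻¹ * x) • A) := by
        rw [Set.smul_set_sdiff, smul_smul, mul_inv_cancel_left]
      calc ν (A ∩ y • A) ≤ ν (y • A \ x • A) := measure_mono h1
        _ = ν (y • (A \ (y⁻¹ * x) • A)) := by rw [h2]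
        _ = ν (A \ (y⁻¹ * x) • A) := measure_smul ν y _
    exact (((hgapν y hyν).trans key).trans_lt hy).false
  -- compactness
  have hsub : A * A⁻¹ ⊆ closure A * (closure A)⁻¹ :=
    Set.mul_subset_mul subset_closure (Set.inv_subset_inv.mpr subset_closure)
  exact ⟨hOpen, hClosed, (hpre.mul hpre.inv).of_isClosed_subset hClosed hsub⟩
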